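/- Let K be a bounded linear operator on H and let (f_i)_{i∈I} be a sequence of vectors in H. Then (f_i) is an atomic system for K if and only if (f_i) is a K-frame for H, i.e., there exist constants A, B > 0 such that A‖K* f‖² ≤ ∑_{i∈I} |⟨f, f_i⟩|² ≤ B‖f‖² for all f ∈ H. -/

import Mathlib

noncomputable section

namespace AtomicAux

open ContinuousLinearMap
open scoped ENNReal

variable {I : Type*} [Countable I] {H : Type*} [NormedAddCommGroup H] [InnerProductSpace ℂ H]
  [CompleteSpace H]

local notation "ℓ2" => lp (fun _ : I => ℂ) 2

lemma rpow_two' (x : ℝ) : x ^ ((2 : ℝ≥0∞).toReal) = x ^ (2 : ℕ) := by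
  norm_num

lemma memtheta (v : I → H)
    (hS : ∀ f : H, Summable (fun i => ‖(inner ℂ f (v i) : ℂ)‖ ^ 2)) (f : H) :
    Memℓp (fun i => (inner ℂ (v i) f : ℂ)) 2 := by
  apply memℓp_gen
  have h := hS f
  have : (fun i => ‖(inner ℂ (v i) f : ℂ)‖ ^ ((2 : ℝ≥0∞).toReal))
      = fun i => ‖(inner ℂ f (v i) : ℂ)‖ ^ (2 : ℕ) := by
    funext i
    rw [rpow_two', norm_inner_symm]
  rw [this]
  exact h

/-- The analysis operator of a Bessel sequence, as a plain function. -/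
def thetaF (v : I → H)
    (hS : ∀ f : H, Summable (fun i => ‖(inner ℂ f (v i) : ℂ)‖ ^ 2)) (f : H) : ℓ2 :=
  ⟨fun i => (inner ℂ (v i) f : ℂ), memtheta v hS f⟩

lemma thetaF_apply (v : I → H) (hS : ∀ f : H, Summable (fun i => ‖(inner ℂ f (v i) : ℂ)‖ ^ 2))
    (f : H) (i : I) : (thetaF v hS f) i = (inner ℂ (v i) f : ℂ) := rfl

lemma norm_thetaF_sq (v : I → H)
    (hS : ∀ f : H, Summable (fun i => ‖(inner ℂ f (v i) : ℂ)‖ ^ 2)) (f : H) :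
    ‖thetaF v hS f‖ ^ 2 = ∑' i, ‖(inner ℂ f (v i) : ℂ)‖ ^ 2 := by
  have h := lp.norm_rpow_eq_tsum (p := 2) (by norm_num) (thetaF v hS f)
  have h2 : ((2 : ℝ≥0∞).toReal) = (2 : ℝ) := by norm_num
  rw [h2] at h
  rw [← Real.rpow_two, h]
  congr 1
  funext i
  rw [thetaF_apply, Real.rpow_two, norm_inner_symm]

/-- The analysis operator of a Bessel sequence. -/
def theta (v : I → H) (B : ℝ) (hBpos : 0 < B)
    (hB : ∀ f : H, Summable (fun i => ‖(inner ℂ f (v i) : ℂ)‖ ^ 2) ∧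
        (∑' i, ‖(inner ℂ f (v i) : ℂ)‖ ^ 2) ≤ B * ‖f‖ ^ 2) : H →L[ℂ] ℓ2 :=
  LinearMap.mkContinuous
    { toFun := thetaF v (fun f => (hB f).1)
      map_add' := by
        intro f g
        ext i
        simp only [thetaF_apply, lp.coeFn_add, Pi.add_apply, thetaF_apply, inner_add_right]
      map_smul' := by
        intro c f
        ext i
        simp only [thetaF_apply, lp.coeFn_smul, Pi.smul_apply, RingHom.id_apply,
          inner_smul_right, smul_eq_mul] }
    (Real.sqrt B)
    (by
      intro f
      have h1 : ‖thetaF v (fun f => (hB f).1) f‖ ≤ Real.sqrt (B * ‖f‖ ^ 2) := by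
        rw [← Real.sqrt_sq (norm_nonneg _)]
        exact Real.sqrt_le_sqrt (by rw [norm_thetaF_sq]; exact (hB f).2)
      rwa [Real.sqrt_mul hBpos.le, Real.sqrt_sq (norm_nonneg f)] at h1)

lemma theta_apply (v : I → H) (B : ℝ) (hBpos : 0 < B) (hB) (f : H) (i : I) :
    (theta v B hBpos hB f) i = (inner ℂ (v i) f : ℂ) := rfl

lemma norm_theta_sq (v : I → H) (B : ℝ) (hBpos : 0 < B) (hB) (f : H) :
    ‖theta v B hBpos hB f‖ ^ 2 = ∑' i, ‖(inner ℂ f (v i) : ℂ)‖ ^ 2 :=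
  norm_thetaF_sq v (fun f => (hB f).1) f

lemma adjoint_theta_single [DecidableEq I] (v : I → H) (B : ℝ) (hBpos : 0 < B) (hB) (i : I) (c : ℂ) :
    (adjoint (theta v B hBpos hB)) (lp.single 2 i c) = c • v i := by
  classical
  apply ext_inner_right ℂ
  intro g
  rw [adjoint_inner_left]
  rw [lp.inner_single_left]
  rw [theta_apply]
  rw [inner_smul_left]
  simp [RCLike.inner_apply, mul_comm]

lemma hasSum_adjoint_theta (v : I → H) (B : ℝ) (hBpos : 0 < B) (hB) (a : ℓ2) :
    HasSum (fun i => a i • v i) ((adjoint (theta v B hBpos hB)) a) := by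
  classical
  have h := lp.hasSum_single (E := fun _ : I => ℂ) (p := 2) (by norm_num) a
  have h2 := (adjoint (theta v B hBpos hB)).hasSum h
  convert h2 using 2 with i
  rw [adjoint_theta_single]

end AtomicAux

set_option maxHeartbeats 1000000 in
open AtomicAux ContinuousLinearMap in
/-- a sequence `(fᵢ)ᵢ` in `H` is an atomic system for `K` (a Bessel sequence
such that for some `c > 0`, every `f ∈ H` has `K f = ∑ᵢ aᵢ fᵢ` for some `a ∈ ℓ²(I)` with
`‖a‖ ≤ c ‖f‖`) iff `(fᵢ)ᵢ` is a `K`-frame, i.e. there are `A, B > 0` with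
`A ‖K* f‖² ≤ ∑ᵢ |⟨f, fᵢ⟩|² ≤ B ‖f‖²` for all `f`. -/
theorem atomic_system_iff_kFrame
    {I : Type*} [Countable I] {H : Type*} [NormedAddCommGroup H] [InnerProductSpace ℂ H]
    [CompleteSpace H] (K : H →L[ℂ] H) (v : I → H) :
    ((∃ B : ℝ, 0 < B ∧ ∀ f : H,
        Summable (fun i => ‖(inner ℂ f (v i) : ℂ)‖ ^ 2) ∧
        (∑' i, ‖(inner ℂ f (v i) : ℂ)‖ ^ 2) ≤ B * ‖f‖ ^ 2) ∧
      ∃ c : ℝ, 0 < c ∧ ∀ f : H, ∃ a : lp (fun _ : I => ℂ) 2,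
        ‖a‖ ≤ c * ‖f‖ ∧ HasSum (fun i => a i • v i) (K f))
    ↔ ∃ A B : ℝ, 0 < A ∧ 0 < B ∧ ∀ f : H,
        Summable (fun i => ‖(inner ℂ f (v i) : ℂ)‖ ^ 2) ∧
        A * ‖ContinuousLinearMap.adjoint K f‖ ^ 2 ≤ (∑' i, ‖(inner ℂ f (v i) : ℂ)‖ ^ 2) ∧
        (∑' i, ‖(inner ℂ f (v i) : ℂ)‖ ^ 2) ≤ B * ‖f‖ ^ 2 := by
  constructor
  · -- atomic system → K-frame
    rintro ⟨⟨B, hBpos, hB⟩, c, hcpos, hc⟩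
    refine ⟨1 / c ^ 2, B, by positivity, hBpos, fun f => ?_⟩
    refine ⟨(hB f).1, ?_, (hB f).2⟩
    set Θ := theta v B hBpos hB with hΘ
    obtain ⟨a, ha, hsum⟩ := hc (adjoint K f)
    have hKK : K (adjoint K f) = adjoint Θ a :=
      hsum.unique (hasSum_adjoint_theta v B hBpos hB a)
    have key : ‖adjoint K f‖ ^ 2 ≤ ‖Θ f‖ * ‖a‖ := by
      have h1 : (inner ℂ (adjoint K f) (adjoint K f) : ℂ) = inner ℂ (Θ f) a := by
        rw [adjoint_inner_left, hKK, ← adjoint_inner_right]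
      have h2 : ‖(inner ℂ (adjoint K f) (adjoint K f) : ℂ)‖ = ‖adjoint K f‖ ^ 2 := by
        rw [inner_self_eq_norm_sq_to_K]
        rw [norm_pow]
        simp [Complex.norm_real]
      rw [← h2, h1]
      exact norm_inner_le_norm _ _
    have hTf : ‖Θ f‖ ^ 2 = ∑' i, ‖(inner ℂ f (v i) : ℂ)‖ ^ 2 := norm_theta_sq v B hBpos hB f
    rw [← hTf]
    have key' : ∀ x y : ℝ, 0 ≤ x → 0 ≤ y → x ^ 2 ≤ y * (c * x) → 1 / c ^ 2 * x ^ 2 ≤ y ^ 2 := by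
      intro x y hx hy hxy
      rcases eq_or_lt_of_le hx with hx0 | hx0
      · rw [← hx0]
        nlinarith
      · have h4 : x ≤ c * y := by nlinarith
        rw [div_mul_eq_mul_div, div_le_iff₀ (by positivity)]
        nlinarith [mul_le_mul h4 h4 hx (by positivity : (0:ℝ) ≤ c * y)]
    refine key' _ _ (norm_nonneg _) (norm_nonneg _) ?_
    exact key.trans (mul_le_mul_of_nonneg_left ha (norm_nonneg (Θ f)))
  · -- K-frame → atomic system
    rintro ⟨A, B, hApos, hBpos, h⟩
    have hB : ∀ f : H, Summable (fun i => ‖(inner ℂ f (v i) : ℂ)‖ ^ 2) ∧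
        (∑' i, ‖(inner ℂ f (v i) : ℂ)‖ ^ 2) ≤ B * ‖f‖ ^ 2 := fun f => ⟨(h f).1, (h f).2.2⟩
    refine ⟨⟨B, hBpos, hB⟩, (Real.sqrt A)⁻¹, by positivity, fun f => ?_⟩
    set Θ := theta v B hBpos hB with hΘ
    -- the functional `g ↦ ⟪K f, g⟫`
    set ψ : H →L[ℂ] ℂ := innerSL ℂ (K f) with hψ
    have hψ_apply : ∀ g : H, ψ g = (inner ℂ (K f) g : ℂ) := fun g => rfl
    -- adjoint norm bound
    have hadj : ∀ g : H, ‖adjoint K g‖ ≤ (Real.sqrt A)⁻¹ * ‖Θ g‖ := by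
      intro g
      have h1 : A * ‖adjoint K g‖ ^ 2 ≤ ‖Θ g‖ ^ 2 := by
        rw [norm_theta_sq]; exact (h g).2.1
      have h2 : ‖adjoint K g‖ ^ 2 ≤ ((Real.sqrt A)⁻¹ * ‖Θ g‖) ^ 2 := by
        rw [mul_pow, inv_pow, Real.sq_sqrt hApos.le, inv_mul_eq_div, le_div_iff₀ hApos]
        nlinarith
      calc ‖adjoint K g‖ = Real.sqrt (‖adjoint K g‖ ^ 2) :=
            (Real.sqrt_sq (norm_nonneg _)).symm
        _ ≤ Real.sqrt (((Real.sqrt A)⁻¹ * ‖Θ g‖) ^ 2) := Real.sqrt_le_sqrt h2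
        _ = (Real.sqrt A)⁻¹ * ‖Θ g‖ := Real.sqrt_sq (by positivity)
    -- well-definedness of the functional on the range of Θ
    have key : ∀ g g' : H, Θ g = Θ g' → ψ g = ψ g' := by
      intro g g' hgg
      have h0 : Θ (g - g') = 0 := by rw [map_sub, hgg, sub_self]
      have h1 : adjoint K (g - g') = 0 := by
        have := hadj (g - g')
        rw [h0, norm_zero, mul_zero] at this
        exact norm_le_zero_iff.mp this
      have h2 : adjoint K g = adjoint K g' := by
        rw [map_sub, sub_eq_zero] at h1; exact h1
      rw [hψ_apply, hψ_apply, ← adjoint_inner_right, ← adjoint_inner_right, h2]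
    set R : Submodule ℂ (lp (fun _ : I => ℂ) 2) := LinearMap.range (Θ : H →ₗ[ℂ] lp (fun _ : I => ℂ) 2) with hR
    set φfun : R → ℂ := fun x => ψ (LinearMap.mem_range.mp x.2).choose with hφfun
    have φfun_eq : ∀ (x : R) (g : H), Θ g = (x : lp (fun _ : I => ℂ) 2) → φfun x = ψ g := by
      intro x g hg
      exact key _ _ ((LinearMap.mem_range.mp x.2).choose_spec.trans hg.symm)
    set φlin : R →ₗ[ℂ] ℂ :=
      { toFun := φfun
        map_add' := by
          intro x y
          show φfun (x + y) = φfun x + φfun y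
          obtain ⟨gx, hgx⟩ := LinearMap.mem_range.mp x.2
          obtain ⟨gy, hgy⟩ := LinearMap.mem_range.mp y.2
          rw [φfun_eq x gx hgx, φfun_eq y gy hgy,
            φfun_eq (x + y) (gx + gy) (by rw [map_add]; exact congrArg₂ (· + ·) hgx hgy)]
          exact map_add ψ gx gy
        map_smul' := by
          intro c x
          show φfun (c • x) = c • φfun x
          obtain ⟨gx, hgx⟩ := LinearMap.mem_range.mp x.2
          rw [φfun_eq x gx hgx,
            φfun_eq (c • x) (c • gx) (by rw [map_smul]; exact congrArg (c • ·) hgx)]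
          exact map_smul ψ c gx } with hφlin
    have hbound : ∀ x : R, ‖φlin x‖ ≤ (‖f‖ * (Real.sqrt A)⁻¹) * ‖x‖ := by
      intro x
      obtain ⟨g, hg⟩ := LinearMap.mem_range.mp x.2
      have h1 : φlin x = ψ g := φfun_eq x g hg
      have h2 : ‖(x : lp (fun _ : I => ℂ) 2)‖ = ‖Θ g‖ := by rw [← hg]; rfl
      rw [h1, hψ_apply]
      calc ‖(inner ℂ (K f) g : ℂ)‖ = ‖(inner ℂ f (adjoint K g) : ℂ)‖ := by
            rw [← adjoint_inner_right]
        _ ≤ ‖f‖ * ‖adjoint K g‖ := norm_inner_le_norm _ _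
        _ ≤ ‖f‖ * ((Real.sqrt A)⁻¹ * ‖Θ g‖) :=
            mul_le_mul_of_nonneg_left (hadj g) (norm_nonneg f)
        _ = (‖f‖ * (Real.sqrt A)⁻¹) * ‖x‖ := by
            rw [show ‖x‖ = ‖(x : lp (fun _ : I => ℂ) 2)‖ from rfl, h2]; ring
    set φ0 : R →L[ℂ] ℂ := LinearMap.mkContinuous φlin (‖f‖ * (Real.sqrt A)⁻¹) hbound with hφ0
    have hφ0norm : ‖φ0‖ ≤ ‖f‖ * (Real.sqrt A)⁻¹ :=
      LinearMap.mkContinuous_norm_le _ (by positivity) _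
    obtain ⟨gext, hgext, hgnorm⟩ := exists_extension_norm_eq R φ0
    set a := (InnerProductSpace.toDual ℂ (lp (fun _ : I => ℂ) 2)).symm gext with ha
    have hanorm : ‖a‖ = ‖gext‖ := LinearIsometryEquiv.norm_map _ gext
    have hKfa : adjoint Θ a = K f := by
      apply ext_inner_right ℂ
      intro g
      rw [adjoint_inner_left]
      have h1 : (inner ℂ a (Θ g) : ℂ) = gext (Θ g) := InnerProductSpace.toDual_symm_apply
      have hmem : Θ g ∈ R := LinearMap.mem_range_self (Θ : H →ₗ[ℂ] lp (fun _ : I => ℂ) 2) g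
      have h2 : gext (Θ g) = φ0 ⟨Θ g, hmem⟩ := hgext ⟨Θ g, hmem⟩
      have h3 : φ0 (⟨Θ g, hmem⟩ : R) = ψ g := φfun_eq ⟨Θ g, hmem⟩ g rfl
      rw [h1, h2, h3, hψ_apply]
    refine ⟨a, ?_, ?_⟩
    · calc ‖a‖ = ‖gext‖ := hanorm
        _ = ‖φ0‖ := hgnorm
        _ ≤ ‖f‖ * (Real.sqrt A)⁻¹ := hφ0norm
        _ = (Real.sqrt A)⁻¹ * ‖f‖ := mul_comm _ _
    · have := hasSum_adjoint_theta v B hBpos hB a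
      rwa [hKfa] at this

end
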